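/- arXiv:1503.00337 — 3 statements merged into one kernel-verified Lean document; each statement's English description precedes it below -/
import Mathlib

section
/- Let n be a natural number and let b, c : Fin n → Fin n → Fin n → ℝ be two tensors. Suppose that for every O(n)-invariant polynomial p in the variables indexed by Fin n × Fin n × Fin n with real coefficients one has eval b p = eval c p. Then there exists an orthogonal matrix U (real n×n matrix with UᵀU = 1) such that b = U • c, where (U • c) i j k = ∑_{a,b',d} U i a * U j b' * U k d * c a b' d. -/
/-- A real `n × n` matrix is orthogonal if `Uᵀ * U = 1`. -/
def IsOrthogonal {n : ℕ} (U : Matrix (Fin n) (Fin n) ℝ) : Prop :=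
  U.transpose * U = 1

/-- The action of an `n × n` matrix `U` on a tensor `c : Fin n → Fin n → Fin n → ℝ`:
`(U • c) i j k = ∑ a b d, U i a * U j b * U k d * c a b d`. -/
def matAct {n : ℕ} (U : Matrix (Fin n) (Fin n) ℝ) (c : Fin n → Fin n → Fin n → ℝ) :
    Fin n → Fin n → Fin n → ℝ :=
  fun i j k => ∑ a, ∑ b, ∑ d, U i a * U j b * U k d * c a b d

/-- Evaluation of a polynomial in the variables `Fin n × Fin n × Fin n` at a tensor. -/
noncomputable def evalTensor {n : ℕ} (c : Fin n → Fin n → Fin n → ℝ)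
    (p : MvPolynomial (Fin n × Fin n × Fin n) ℝ) : ℝ :=
  MvPolynomial.eval (fun v => c v.1 v.2.1 v.2.2) p

open MvPolynomial MeasureTheory

namespace Stmt1Aux

variable {n : ℕ}

abbrev Mat (n : ℕ) := Matrix (Fin n) (Fin n) ℝ
abbrev Idx (n : ℕ) := Fin n × Fin n × Fin n

/-- coefficient of the linear action on flattened tensors -/
def A (M : Mat n) (v w : Idx n) : ℝ := M v.1 w.1 * M v.2.1 w.2.1 * M v.2.2 w.2.2

/-- the linear action on flattened tensors -/
def act (M : Mat n) (x : Idx n → ℝ) : Idx n → ℝ := fun v => ∑ w, A M v w * x w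

theorem triple (X Y Z : Fin n → ℝ) :
    ∑ w : Idx n, (X w.1 * Y w.2.1 * Z w.2.2) =
      (∑ a, X a) * (∑ b, Y b) * (∑ d, Z d) := by
  simp only [Fintype.sum_prod_type]
  rw [Finset.sum_mul_sum, Finset.sum_mul]
  refine Finset.sum_congr rfl fun a _ => ?_
  rw [Finset.sum_mul]
  refine Finset.sum_congr rfl fun b' _ => ?_
  rw [Finset.mul_sum]

theorem act_matAct (U : Mat n) (c : Fin n → Fin n → Fin n → ℝ) :
    (fun v : Idx n => matAct U c v.1 v.2.1 v.2.2) = act U (fun v => c v.1 v.2.1 v.2.2) := by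
  funext v
  simp only [matAct, act, A, Fintype.sum_prod_type]

theorem A_mul (M N : Mat n) (v u : Idx n) : A (M * N) v u = ∑ w, A M v w * A N w u := by
  have h := triple (fun a => M v.1 a * N a u.1) (fun a => M v.2.1 a * N a u.2.1)
    (fun a => M v.2.2 a * N a u.2.2)
  simp only [A, Matrix.mul_apply]
  rw [← h]
  exact Finset.sum_congr rfl fun w _ => by ring

theorem act_act (M N : Mat n) (x : Idx n → ℝ) : act M (act N x) = act (M * N) x := by
  funext v
  simp only [act, A_mul, Finset.mul_sum, Finset.sum_mul]
  rw [Finset.sum_comm]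
  exact Finset.sum_congr rfl fun u _ => Finset.sum_congr rfl fun w _ => by ring

theorem A_one (v w : Idx n) : A (1 : Mat n) v w = if v = w then 1 else 0 := by
  rcases v with ⟨v1, v2, v3⟩; rcases w with ⟨w1, w2, w3⟩
  simp only [A, Matrix.one_apply, Prod.mk.injEq]
  by_cases h1 : v1 = w1 <;> by_cases h2 : v2 = w2 <;> by_cases h3 : v3 = w3 <;>
    simp [h1, h2, h3]

theorem act_one (x : Idx n → ℝ) : act (1 : Mat n) x = x := by
  funext v
  simp [act, A_one]

/-- substitution: the polynomial map corresponding to `act M` -/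
noncomputable def substP (M : Mat n) : Idx n → MvPolynomial (Idx n) ℝ :=
  fun v => ∑ w, MvPolynomial.C (A M v w) * MvPolynomial.X w

theorem eval_substP (M : Mat n) (x : Idx n → ℝ) (v : Idx n) :
    eval x (substP M v) = act M x v := by
  simp [substP, act]

theorem eval_bind₁ (x : Idx n → ℝ) (g : Idx n → MvPolynomial (Idx n) ℝ)
    (q : MvPolynomial (Idx n) ℝ) :
    eval x (bind₁ g q) = eval (fun v => eval x (g v)) q := by
  rw [MvPolynomial.hom_bind₁]
  apply MvPolynomial.eval₂Hom_congr _ rfl rfl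
  ext r
  simp

theorem eval_bind₁_substP (M : Mat n) (x : Idx n → ℝ) (q : MvPolynomial (Idx n) ℝ) :
    eval x (bind₁ (substP M) q) = eval (act M x) q := by
  rw [eval_bind₁]
  have : (fun v => eval x (substP M v)) = act M x := funext fun v => eval_substP M x v
  rw [this]

theorem totalDegree_substP (M : Mat n) (v : Idx n) : (substP M v).totalDegree ≤ 1 := by
  refine (totalDegree_finset_sum _ _).trans (Finset.sup_le fun w _ => ?_)
  refine (totalDegree_mul _ _).trans ?_
  simp [totalDegree_C, totalDegree_X]

theorem totalDegree_bind₁_substP (M : Mat n) (q : MvPolynomial (Idx n) ℝ) :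
    (bind₁ (substP M) q).totalDegree ≤ q.totalDegree := by
  conv_lhs => rw [q.as_sum]
  rw [map_sum]
  refine (totalDegree_finset_sum _ _).trans (Finset.sup_le fun m hm => ?_)
  rw [bind₁_monomial]
  refine (totalDegree_mul _ _).trans ?_
  simp only [totalDegree_C, zero_add]
  refine (totalDegree_finset_prod _ _).trans ?_
  have h1 : ∑ v ∈ m.support, ((substP M v) ^ m v).totalDegree ≤ ∑ v ∈ m.support, m v :=
    Finset.sum_le_sum fun v _ => (totalDegree_pow _ _).trans
      (le_trans (Nat.mul_le_mul_left _ (totalDegree_substP M v)) (le_of_eq (mul_one _)))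
  exact h1.trans (le_totalDegree hm)

theorem continuous_entry (a b : Fin n) : Continuous fun M : Mat n => M a b :=
  (continuous_apply b).comp (continuous_apply a)

theorem continuous_A (v w : Idx n) : Continuous fun M : Mat n => A M v w :=
  ((continuous_entry _ _).mul (continuous_entry _ _)).mul (continuous_entry _ _)

theorem continuous_coeff_bind₁ (q : MvPolynomial (Idx n) ℝ) :
    ∀ m : Idx n →₀ ℕ, Continuous fun M : Mat n => coeff m (bind₁ (substP M) q) := by
  induction q using MvPolynomial.induction_on with
  | C a =>
    intro m
    simp only [bind₁_C_right]
    exact continuous_const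
  | add p r hp hr =>
    intro m
    simp only [map_add, coeff_add]
    exact (hp m).add (hr m)
  | mul_X p i hp =>
    intro m
    have key : ∀ M : Mat n, bind₁ (substP M) (p * X i)
        = ∑ w, MvPolynomial.C (A M i w) * (bind₁ (substP M) p * X w) := by
      intro M
      rw [map_mul, bind₁_X_right]
      show bind₁ (substP M) p * (∑ w, MvPolynomial.C (A M i w) * MvPolynomial.X w) = _
      rw [Finset.mul_sum]
      exact Finset.sum_congr rfl fun w _ => by ring
    simp only [key, MvPolynomial.coeff_sum, coeff_C_mul, coeff_mul_X']
    apply continuous_finset_sum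
    intro w _
    refine (continuous_A i w).mul ?_
    by_cases hw : w ∈ m.support
    · simp only [if_pos hw]; exact hp _
    · simp only [if_neg hw]; exact continuous_const

theorem continuous_act (x : Idx n → ℝ) : Continuous fun M : Mat n => act M x := by
  apply continuous_pi
  intro v
  exact continuous_finset_sum _ fun w _ => (continuous_A v w).mul continuous_const


/-! ### The orthogonal group as a compact topological group -/

theorem star_eq_transpose (M : Mat n) : star M = M.transpose := by
  ext i j
  simp [Matrix.star_apply]

theorem mem_G_iff (M : Mat n) : M ∈ Matrix.unitaryGroup (Fin n) ℝ ↔ IsOrthogonal M := by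
  rw [Matrix.mem_unitaryGroup_iff', star_eq_transpose]
  rfl

abbrev G (n : ℕ) := Matrix.unitaryGroup (Fin n) ℝ

instance : IsTopologicalGroup (G n) where
  continuous_mul := by
    apply Continuous.subtype_mk
    exact Continuous.matrix_mul (continuous_subtype_val.comp continuous_fst)
      (continuous_subtype_val.comp continuous_snd)
  continuous_inv := by
    apply Continuous.subtype_mk
    exact continuous_star.comp continuous_subtype_val

theorem entry_bound (M : Mat n) (hM : IsOrthogonal M) (i j : Fin n) :
    M i j ∈ Set.Icc (-1:ℝ) 1 := by
  have h1 : (M.transpose * M) j j = 1 := by rw [hM]; simp [Matrix.one_apply]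
  rw [Matrix.mul_apply] at h1
  simp only [Matrix.transpose_apply] at h1
  have h2 : M i j * M i j ≤ 1 := by
    rw [← h1]
    exact Finset.single_le_sum (fun k _ => mul_self_nonneg (M k j)) (Finset.mem_univ i)
  constructor <;> nlinarith

theorem isCompact_G :
    IsCompact ((Matrix.unitaryGroup (Fin n) ℝ : Submonoid (Mat n)) : Set (Mat n)) := by
  have hK : IsCompact ((Set.univ.pi fun _ : Fin n =>
      Set.univ.pi fun _ : Fin n => Set.Icc (-1:ℝ) 1) : Set (Mat n)) :=
    isCompact_univ_pi fun _ => isCompact_univ_pi fun _ => isCompact_Icc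
  apply hK.of_isClosed_subset
  · have : ((Matrix.unitaryGroup (Fin n) ℝ : Submonoid (Mat n)) : Set (Mat n)) =
        (fun M : Mat n => star M * M) ⁻¹' {1} ∩ (fun M : Mat n => M * star M) ⁻¹' {1} := by
      ext M
      simp only [Set.mem_inter_iff, Set.mem_preimage, Set.mem_singleton_iff]
      exact Unitary.mem_iff
    rw [this]
    have hstar : Continuous (star : Mat n → Mat n) := continuous_star
    exact ((isClosed_singleton.preimage (hstar.matrix_mul continuous_id)).inter
      (isClosed_singleton.preimage (continuous_id.matrix_mul hstar)))
  · intro M hM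
    replace hM : IsOrthogonal M := (mem_G_iff M).mp hM
    rw [Set.mem_pi]
    intro i _
    rw [Set.mem_pi]
    intro j _
    exact entry_bound M hM i j

instance : CompactSpace (G n) := isCompact_iff_compactSpace.mp isCompact_G

instance : MeasurableSpace (G n) := borel _
instance : BorelSpace (G n) := ⟨rfl⟩

instance : LocallyCompactSpace (G n) := by
  set_option synthInstance.maxHeartbeats 1000000 in infer_instance

noncomputable def haarG (n : ℕ) : Measure (G n) := MeasureTheory.Measure.haar

instance : IsFiniteMeasure (haarG n) := by unfold haarG; infer_instance

instance : (haarG n).IsMulLeftInvariant := by unfold haarG; infer_instance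

theorem haarG_univ_ne_zero : (haarG n) Set.univ ≠ 0 := by
  have h : Measure.IsOpenPosMeasure (haarG n) := by unfold haarG; infer_instance
  exact h.open_pos Set.univ isOpen_univ Set.univ_nonempty

theorem cont_integrable {f : G n → ℝ} (hf : Continuous f) : Integrable f (haarG n) :=
  hf.integrable_of_hasCompactSupport
    (IsCompact.of_isClosed_subset isCompact_univ (isClosed_tsupport f) (Set.subset_univ _))

/-! ### Stone-Weierstrass -/

theorem aeval_id_eq_eval (f : Idx n → ℝ) (p : MvPolynomial (Idx n) ℝ) :
    aeval f p = eval f p := by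
  rw [aeval_def, Algebra.algebraMap_self]
  rfl

theorem exists_poly_approx (K : Set (Idx n → ℝ)) (hK : IsCompact K)
    (f : (Idx n → ℝ) → ℝ) (hf : Continuous f) (ε : ℝ) (hε : 0 < ε) :
    ∃ q : MvPolynomial (Idx n) ℝ, ∀ x ∈ K, |eval x q - f x| < ε := by
  haveI : CompactSpace K := isCompact_iff_compactSpace.mp hK
  set coords : Idx n → C(K, ℝ) :=
    fun v => ⟨fun x => (x : Idx n → ℝ) v, (continuous_apply v).comp continuous_subtype_val⟩
  set Alg : Subalgebra ℝ C(K, ℝ) := (MvPolynomial.aeval (R := ℝ) coords).range with hAlg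
  have key : ∀ (r : MvPolynomial (Idx n) ℝ) (y : K),
      (MvPolynomial.aeval (R := ℝ) coords r) y = eval (y : Idx n → ℝ) r := by
    intro r y
    have h0 := MvPolynomial.comp_aeval (φ := ContinuousMap.evalAlgHom (S := ℝ) (R := ℝ) y)
      (f := coords)
    have h2 := congrFun (congrArg DFunLike.coe h0) r
    simp only [AlgHom.comp_apply] at h2
    rw [show (ContinuousMap.evalAlgHom (S := ℝ) (R := ℝ) y) (aeval coords r)
      = (aeval coords r) y from rfl] at h2
    rw [h2, aeval_id_eq_eval]
    rfl
  have sep : Alg.SeparatesPoints := by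
    intro x y hxy
    obtain ⟨v, hv⟩ : ∃ v, (x : Idx n → ℝ) v ≠ (y : Idx n → ℝ) v := by
      by_contra hcon; push_neg at hcon; exact hxy (Subtype.ext (funext hcon))
    have hmem : coords v ∈ Alg := ⟨X v, aeval_X _ v⟩
    refine ⟨_, ⟨coords v, hmem, rfl⟩, ?_⟩
    simpa [coords] using hv
  obtain ⟨⟨g, hg⟩, hb⟩ := ContinuousMap.exists_mem_subalgebra_near_continuous_of_separatesPoints
    Alg sep (fun x : K => f x) (hf.comp continuous_subtype_val) ε hε
  obtain ⟨q, rfl⟩ := hg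
  refine ⟨q, fun x hx => ?_⟩
  have hbx := hb ⟨x, hx⟩
  rw [Real.norm_eq_abs] at hbx
  simpa [key q ⟨x, hx⟩] using hbx

/-! ### The averaged polynomial -/

/-- all exponents bounded by `D` -/
noncomputable def SFin (n D : ℕ) : Finset (Idx n →₀ ℕ) :=
  (Fintype.piFinset fun _ : Idx n => Finset.range (D+1)).map
    (Finsupp.equivFunOnFinite.symm.toEmbedding)

theorem mem_SFin {D : ℕ} {m : Idx n →₀ ℕ} : m ∈ SFin n D ↔ ∀ v, m v ≤ D := by
  rw [SFin, Finset.mem_map_equiv]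
  simp [Fintype.mem_piFinset, Nat.lt_succ_iff]

theorem support_bind₁_subset (M : Mat n) (q : MvPolynomial (Idx n) ℝ) :
    (bind₁ (substP M) q).support ⊆ SFin n q.totalDegree := by
  intro m hm
  rw [mem_SFin]
  intro v
  have h1 : m.sum (fun _ e => e) ≤ q.totalDegree :=
    le_trans (le_totalDegree hm) (totalDegree_bind₁_substP M q)
  by_cases hv : v ∈ m.support
  · exact le_trans (Finset.single_le_sum (f := fun v => m v)
      (fun _ _ => Nat.zero_le _) hv) h1
  · simp [Finsupp.notMem_support_iff.mp hv]

theorem eval_eq_sum_S (x : Idx n → ℝ) (p : MvPolynomial (Idx n) ℝ)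
    (S : Finset (Idx n →₀ ℕ)) (hs : p.support ⊆ S) :
    eval x p = ∑ m ∈ S, coeff m p * ∏ v ∈ m.support, x v ^ m v := by
  rw [eval_eq]
  refine Finset.sum_subset hs fun m _ hm => ?_
  rw [MvPolynomial.notMem_support_iff.mp hm, zero_mul]

/-- orbit-average of the polynomial `q` -/
noncomputable def avgP (n : ℕ) (q : MvPolynomial (Idx n) ℝ) : MvPolynomial (Idx n) ℝ :=
  ∑ m ∈ SFin n q.totalDegree,
    monomial m (∫ g : G n, coeff m (bind₁ (substP (star ((g : Mat n)))) q) ∂ haarG n)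

theorem integrable_coeff (q : MvPolynomial (Idx n) ℝ) (m : Idx n →₀ ℕ) :
    Integrable (fun g : G n => coeff m (bind₁ (substP (star ((g : Mat n)))) q)) (haarG n) :=
  cont_integrable ((continuous_coeff_bind₁ q m).comp
    (continuous_star.comp continuous_subtype_val))

theorem continuous_orbit (x : Idx n → ℝ) :
    Continuous fun g : G n => act (star ((g : Mat n))) x :=
  (continuous_act x).comp (continuous_star.comp continuous_subtype_val)

theorem integrable_eval_orbit (q : MvPolynomial (Idx n) ℝ) (x : Idx n → ℝ) :
    Integrable (fun g : G n => eval (act (star ((g : Mat n))) x) q) (haarG n) :=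
  cont_integrable ((MvPolynomial.continuous_eval (p := q)).comp (continuous_orbit x))

theorem eval_avgP (q : MvPolynomial (Idx n) ℝ) (x : Idx n → ℝ) :
    eval x (avgP n q) = ∫ g : G n, eval (act (star ((g : Mat n))) x) q ∂ haarG n := by
  rw [avgP, map_sum]
  have h1 : ∀ m ∈ SFin n q.totalDegree,
      eval x (monomial m (∫ g : G n, coeff m (bind₁ (substP (star ((g : Mat n)))) q) ∂ haarG n))
      = ∫ g : G n, coeff m (bind₁ (substP (star ((g : Mat n)))) q)
          * ∏ v ∈ m.support, x v ^ m v ∂ haarG n := by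
    intro m _
    rw [eval_monomial, MeasureTheory.integral_mul_const]
    rfl
  rw [Finset.sum_congr rfl h1, ← MeasureTheory.integral_finset_sum _
    (fun m _ => (integrable_coeff q m).mul_const _)]
  refine MeasureTheory.integral_congr_ae (Filter.Eventually.of_forall fun g => ?_)
  show ∑ m ∈ SFin n q.totalDegree, coeff m (bind₁ (substP (star ((g : Mat n)))) q)
      * ∏ v ∈ m.support, x v ^ m v = _
  rw [← eval_eq_sum_S x _ _ (support_bind₁_subset _ q), eval_bind₁_substP]

theorem star_orth_of_mem (g : G n) : IsOrthogonal (star ((g : Mat n))) := by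
  have h := (Unitary.mem_iff).mp g.2
  rw [IsOrthogonal, ← star_eq_transpose, star_star]
  exact h.2

theorem avgP_invariant (q : MvPolynomial (Idx n) ℝ) (U : Mat n) (hU : IsOrthogonal U)
    (x : Idx n → ℝ) : eval (act U x) (avgP n q) = eval x (avgP n q) := by
  rw [eval_avgP, eval_avgP]
  set u : G n := ⟨U, (mem_G_iff U).mpr hU⟩
  have hsUU : star U * U = 1 := by rw [star_eq_transpose]; exact hU
  have key := MeasureTheory.integral_mul_left_eq_self (μ := haarG n)
    (f := fun g : G n => eval (act (star ((g : Mat n)) * U) x) q) u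
  have h1 : ∀ g : G n, eval (act (star (((u * g : G n) : Mat n)) * U) x) q
      = eval (act (star ((g : Mat n))) x) q := by
    intro g
    congr 1
    have : ((u * g : G n) : Mat n) = U * (g : Mat n) := rfl
    rw [this, star_mul, mul_assoc, hsUU, mul_one]
  calc ∫ g : G n, eval (act (star ((g : Mat n))) (act U x)) q ∂ haarG n
      = ∫ g : G n, eval (act (star ((g : Mat n)) * U) x) q ∂ haarG n := by
        simp only [act_act]
    _ = ∫ g : G n, eval (act (star (((u * g : G n) : Mat n)) * U) x) q ∂ haarG n := key.symm
    _ = ∫ g : G n, eval (act (star ((g : Mat n))) x) q ∂ haarG n := by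
        simp only [h1]

end Stmt1Aux

theorem stmt1 (n : ℕ) (b c : Fin n → Fin n → Fin n → ℝ)
    (h : ∀ p : MvPolynomial (Fin n × Fin n × Fin n) ℝ,
      (∀ (U : Matrix (Fin n) (Fin n) ℝ) (x : Fin n → Fin n → Fin n → ℝ),
        IsOrthogonal U → evalTensor (matAct U x) p = evalTensor x p) →
      evalTensor b p = evalTensor c p) :
    ∃ U : Matrix (Fin n) (Fin n) ℝ, IsOrthogonal U ∧ b = matAct U c := by
  classical
  open Stmt1Aux in
  by_contra hcon
  push_neg at hcon
  set bV : Idx n → ℝ := fun v => b v.1 v.2.1 v.2.2 with hbVdef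
  set cV : Idx n → ℝ := fun v => c v.1 v.2.1 v.2.2 with hcVdef
  set Kb : Set (Idx n → ℝ) := Set.range (fun g : G n => act (star ((g : Mat n))) bV) with hKbdef
  set Kc : Set (Idx n → ℝ) := Set.range (fun g : G n => act (star ((g : Mat n))) cV) with hKcdef
  have hKbc : IsCompact Kb := isCompact_range (continuous_orbit bV)
  have hKcc : IsCompact Kc := isCompact_range (continuous_orbit cV)
  have h1 : ∀ (u : G n) (y : Idx n → ℝ), act ((u : Mat n)) (act (star ((u : Mat n))) y) = y := by
    intro u y
    rw [act_act]
    have huu : (u : Mat n) * star (u : Mat n) = 1 := ((Unitary.mem_iff).mp u.2).2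
    rw [huu, act_one]
  have hdisj : Disjoint Kb Kc := by
    rw [Set.disjoint_left]
    rintro x ⟨g, rfl⟩ ⟨g', hg'⟩
    have hg'2 : act (star ((g' : Mat n))) cV = act (star ((g : Mat n))) bV := hg'
    have hb2 : bV = act ((g : Mat n) * star ((g' : Mat n))) cV := by
      rw [← act_act, hg'2, h1 g bV]
    have horth : IsOrthogonal ((g : Mat n) * star ((g' : Mat n))) :=
      (mem_G_iff _).mp (mul_mem g.2 (Unitary.star_mem g'.2))
    apply hcon _ horth
    funext i j k
    have h5 := congrFun hb2 (i, j, k)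
    exact h5.trans (congrFun (act_matAct _ c) (i, j, k)).symm
  obtain ⟨f, hf0, hf1, _⟩ :=
    exists_continuous_zero_one_of_isClosed hKcc.isClosed hKbc.isClosed hdisj.symm
  obtain ⟨q, hq⟩ := exists_poly_approx (Kb ∪ Kc) (hKbc.union hKcc) f f.continuous
    (1/3) (by norm_num)
  have hinv : ∀ (U : Matrix (Fin n) (Fin n) ℝ) (x : Fin n → Fin n → Fin n → ℝ),
      IsOrthogonal U → evalTensor (matAct U x) (avgP n q) = evalTensor x (avgP n q) := by
    intro U x hU
    show MvPolynomial.eval (fun v => matAct U x v.1 v.2.1 v.2.2) (avgP n q)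
      = MvPolynomial.eval (fun v => x v.1 v.2.1 v.2.2) (avgP n q)
    rw [act_matAct U x]
    exact avgP_invariant q U hU _
  have heq := h (avgP n q) hinv
  have hEb : evalTensor b (avgP n q)
      = ∫ g : G n, MvPolynomial.eval (act (star ((g : Mat n))) bV) q ∂ haarG n := eval_avgP q bV
  have hEc : evalTensor c (avgP n q)
      = ∫ g : G n, MvPolynomial.eval (act (star ((g : Mat n))) cV) q ∂ haarG n := eval_avgP q cV
  set m0 : ℝ := ((haarG n) Set.univ).toReal with hm0def
  have hm0pos : 0 < m0 := ENNReal.toReal_pos haarG_univ_ne_zero (measure_ne_top _ _)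
  have hb_lb : (fun _ : G n => (2/3 : ℝ))
      ≤ fun g : G n => MvPolynomial.eval (act (star ((g : Mat n))) bV) q := by
    intro g
    have happ := hq _ (Or.inl ⟨g, rfl⟩)
    have hfval : f (act (star ((g : Mat n))) bV) = 1 := by
      have := hf1 (show act (star ((g : Mat n))) bV ∈ Kb from ⟨g, rfl⟩)
      simpa using this
    rw [hfval] at happ
    have := abs_lt.mp happ
    simp only
    linarith [this.1]
  have hc_ub : (fun g : G n => MvPolynomial.eval (act (star ((g : Mat n))) cV) q)
      ≤ fun _ : G n => (1/3 : ℝ) := by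
    intro g
    have happ := hq _ (Or.inr ⟨g, rfl⟩)
    have hfval : f (act (star ((g : Mat n))) cV) = 0 := by
      have := hf0 (show act (star ((g : Mat n))) cV ∈ Kc from ⟨g, rfl⟩)
      simpa using this
    rw [hfval] at happ
    have := abs_lt.mp happ
    simp only
    linarith [this.1, this.2]
  have hIb : 2/3 * m0 ≤ evalTensor b (avgP n q) := by
    rw [hEb]
    have := MeasureTheory.integral_mono (integrable_const (2/3 : ℝ))
      (integrable_eval_orbit q bV) hb_lb
    rwa [MeasureTheory.integral_const, smul_eq_mul, mul_comm] at this
  have hIc : evalTensor c (avgP n q) ≤ 1/3 * m0 := by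
    rw [hEc]
    have := MeasureTheory.integral_mono (integrable_eval_orbit q cV)
      (integrable_const (1/3 : ℝ)) hc_ub
    rwa [MeasureTheory.integral_const, smul_eq_mul, mul_comm] at this
  rw [heq] at hIb
  linarith
end

section
/- Let n be a natural number and let c : Fin n → Fin n → Fin n → ℝ be cyclically invariant, i.e. c i j k = c j k i for all i, j, k. Then ∑_{i,j,k} c i j k * c i k j = - ∑_{i,j,k} (c i j k)^2 if and only if c is alternating, i.e. c i k j = - c i j k for all i, j, k (all sums over Fin n). -/
theorem stmt2 (n : ℕ) (c : Fin n → Fin n → Fin n → ℝ)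
    (hcyc : ∀ i j k, c i j k = c j k i) :
    (∑ i : Fin n, ∑ j : Fin n, ∑ k : Fin n, c i j k * c i k j)
        = - ∑ i : Fin n, ∑ j : Fin n, ∑ k : Fin n, (c i j k) ^ 2 ↔
      ∀ i j k, c i k j = - c i j k := by
  have hswap : (∑ i : Fin n, ∑ j : Fin n, ∑ k : Fin n, (c i k j) ^ 2)
      = ∑ i : Fin n, ∑ j : Fin n, ∑ k : Fin n, (c i j k) ^ 2 := by
    refine Finset.sum_congr rfl fun i _ => ?_
    exact Finset.sum_comm
  have key : (∑ i : Fin n, ∑ j : Fin n, ∑ k : Fin n, (c i j k + c i k j) ^ 2)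
      = 2 * (∑ i : Fin n, ∑ j : Fin n, ∑ k : Fin n, (c i j k) ^ 2)
        + 2 * (∑ i : Fin n, ∑ j : Fin n, ∑ k : Fin n, c i j k * c i k j) := by
    simp_rw [add_sq, Finset.sum_add_distrib, mul_assoc, ← Finset.mul_sum]
    rw [hswap]; ring
  constructor
  · intro h
    have hz : (∑ i : Fin n, ∑ j : Fin n, ∑ k : Fin n, (c i j k + c i k j) ^ 2) = 0 := by
      rw [key, h]; ring
    intro i j k
    have h1 := (Finset.sum_eq_zero_iff_of_nonneg (fun i _ =>
      Finset.sum_nonneg fun j _ => Finset.sum_nonneg fun k _ => sq_nonneg _)).mp hz i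
      (Finset.mem_univ i)
    have h2 := (Finset.sum_eq_zero_iff_of_nonneg (fun j _ =>
      Finset.sum_nonneg fun k _ => sq_nonneg _)).mp h1 j (Finset.mem_univ j)
    have h3 := (Finset.sum_eq_zero_iff_of_nonneg (fun k _ => sq_nonneg _)).mp h2 k
      (Finset.mem_univ k)
    have := pow_eq_zero_iff (n := 2) (by norm_num) |>.mp h3
    linarith
  · intro h
    have : (∑ i : Fin n, ∑ j : Fin n, ∑ k : Fin n, (c i j k + c i k j) ^ 2) = 0 := by
      refine Finset.sum_eq_zero fun i _ => Finset.sum_eq_zero fun j _ =>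
        Finset.sum_eq_zero fun k _ => ?_
      rw [h]; ring
    rw [this] at key
    linarith
end

section
/- Let k ≥ 1 and let q ∈ Q, c ∈ C and r ∈ R be permutations of Fin (6k). If q F q⁻¹ = (cr) F (cr)⁻¹, then sgn(c) = 1. -/
/-- The `i`-th element (for `i : Fin 3`) of the `j`-th block (for `j : Fin (2*k)`);
in 1-indexed labels this is the element of the block `{3j-2, 3j-1, 3j}`. -/
def blk {k : ℕ} (j : Fin (2 * k)) (i : Fin 3) : Fin (6 * k) :=
  ⟨3 * j.val + i.val, by have := j.isLt; have := i.isLt; omega⟩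

/-- The group `B = B₁B₂⋯B_{2k}`, where `B_j` is the cyclic group generated by the
3-cycle `(3j-2, 3j-1, 3j)`: on each block, `b` acts as a cyclic rotation. -/
def Bset (k : ℕ) : Set (Equiv.Perm (Fin (6 * k))) :=
  {b | ∀ j : Fin (2 * k), ∃ s : Fin 3, ∀ i : Fin 3, b (blk j i) = blk j (i + s)}

/-- The group `D` of permutations permuting the blocks while preserving positions
inside each block. -/
def Dset (k : ℕ) : Set (Equiv.Perm (Fin (6 * k))) :=
  {d | ∃ π : Equiv.Perm (Fin (2 * k)), ∀ (j : Fin (2 * k)) (i : Fin 3), d (blk j i) = blk (π j) i}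

/-- The group `Q = BD`. -/
def Qset (k : ℕ) : Set (Equiv.Perm (Fin (6 * k))) :=
  {q | ∃ b ∈ Bset k, ∃ d ∈ Dset k, q = b * d}

/-- The underlying function of the involution `F`: in 1-indexed labels it swaps
`i` and `ī = 3k + i` for `i ∈ {1, …, 3k}`. -/
def Ffun (k : ℕ) : Fin (6 * k) → Fin (6 * k) := fun a =>
  if h : a.val < 3 * k then ⟨a.val + 3 * k, by omega⟩
  else ⟨a.val - 3 * k, by have := a.isLt; omega⟩

lemma Ffun_involutive (k : ℕ) : Function.Involutive (Ffun k) := by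
  intro a
  have ha := a.isLt
  by_cases h : a.val < 3 * k
  · have h2 : ¬ (a.val + 3 * k < 3 * k) := by omega
    apply Fin.ext
    simp [Ffun, h, h2]
  · have h2 : a.val - 3 * k < 3 * k := by omega
    apply Fin.ext
    simp only [Ffun, h, h2, dif_pos, dif_neg, not_false_iff]
    omega

/-- The perfect matching `F` with edges `{i, ī}`, `i ∈ {1, …, 3k}`. -/
def Fperm (k : ℕ) : Equiv.Perm (Fin (6 * k)) :=
  Function.Involutive.toPerm (Ffun k) (Ffun_involutive k)

/-- The four first columns `K₁, K₂, K₃, K₄` of the tableau `T`: in 1-indexed labels,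
`K₁ = {3i-2 : i ∈ [k]}`, `K₂ = {(3i-2)‾ : i ∈ [k]}`, `K₃ = {3i-1 : i ∈ [k]}`,
`K₄ = {(3i-1)‾ : i ∈ [k]}`. -/
def colK (k : ℕ) : Fin 4 → Set (Fin (6 * k))
  | 0 => {a | ∃ t < k, a.val = 3 * t}
  | 1 => {a | ∃ t < k, a.val = 3 * k + 3 * t}
  | 2 => {a | ∃ t < k, a.val = 3 * t + 1}
  | 3 => {a | ∃ t < k, a.val = 3 * k + 3 * t + 1}

/-- `C_i`: the group of permutations fixing every point outside `K_i`. -/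
def Cgrp (k : ℕ) (i : Fin 4) : Set (Equiv.Perm (Fin (6 * k))) :=
  {c | ∀ a, a ∉ colK k i → c a = a}

/-- The group `C = C₁C₂C₃C₄`. -/
def Cset (k : ℕ) : Set (Equiv.Perm (Fin (6 * k))) :=
  {c | ∃ c₁ ∈ Cgrp k 0, ∃ c₂ ∈ Cgrp k 1, ∃ c₃ ∈ Cgrp k 2, ∃ c₄ ∈ Cgrp k 3,
    c = c₁ * c₂ * c₃ * c₄}

/-- The (1-indexed) row of the tableau `T` containing a given element of `Fin (6*k)`:
an element with 1-indexed core label `i ∈ {1, …, 3k}` (where the labels `i` and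
`ī = 3k + i` have core `i`) is in row 1 if `i ≤ 3` or `3 ∣ i`, and in row
`i/3 + 1` otherwise. So row 1 is `1, 1̄, 2, 2̄, 3, 3̄, 6, 6̄, …, 3k, (3k)‾` and
row `j` (for `2 ≤ j ≤ k`) is `3j-2, (3j-2)‾, 3j-1, (3j-1)‾`. -/
def rowIdx (k : ℕ) (a : Fin (6 * k)) : ℕ :=
  if a.val % (3 * k) + 1 ≤ 3 ∨ 3 ∣ (a.val % (3 * k) + 1) then 1
  else (a.val % (3 * k) + 1) / 3 + 1

/-- The group `R = R₁⋯R_k`, where `R_j` permutes the elements of row `j` of `T` and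
fixes everything else: since the rows partition `Fin (6*k)`, this is exactly the group
of permutations preserving each row of `T`. -/
def Rset (k : ℕ) : Set (Equiv.Perm (Fin (6 * k))) :=
  {r | ∀ a, rowIdx k (r a) = rowIdx k a}

-- membership characterizations
lemma mem_colK0 {k : ℕ} (a : Fin (6*k)) : a ∈ colK k 0 ↔ a.val < 3*k ∧ a.val % 3 = 0 := by
  constructor
  · rintro ⟨t, ht, h⟩; omega
  · rintro ⟨h1, h2⟩; exact ⟨a.val / 3, by omega, by omega⟩

lemma mem_colK1 {k : ℕ} (a : Fin (6*k)) : a ∈ colK k 1 ↔ 3*k ≤ a.val ∧ a.val % 3 = 0 := by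
  have := a.isLt
  constructor
  · rintro ⟨t, ht, h⟩; omega
  · rintro ⟨h1, h2⟩; exact ⟨(a.val - 3*k) / 3, by omega, by omega⟩

lemma mem_colK2 {k : ℕ} (a : Fin (6*k)) : a ∈ colK k 2 ↔ a.val < 3*k ∧ a.val % 3 = 1 := by
  constructor
  · rintro ⟨t, ht, h⟩; omega
  · rintro ⟨h1, h2⟩; exact ⟨a.val / 3, by omega, by omega⟩

lemma mem_colK3 {k : ℕ} (a : Fin (6*k)) : a ∈ colK k 3 ↔ 3*k ≤ a.val ∧ a.val % 3 = 1 := by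
  have := a.isLt
  constructor
  · rintro ⟨t, ht, h⟩; omega
  · rintro ⟨h1, h2⟩; exact ⟨(a.val - 3*k) / 3, by omega, by omega⟩

lemma colK_disjoint {k : ℕ} {a : Fin (6*k)} {l l' : Fin 4} (h : a ∈ colK k l)
    (h' : a ∈ colK k l') : l = l' := by
  fin_cases l <;> fin_cases l' <;>
    simp_all [mem_colK0, mem_colK1, mem_colK2, mem_colK3] <;> omega

lemma rowIdx_blk {k : ℕ} (J : Fin (2*k)) (i : Fin 3) :
    rowIdx k (blk J i) = if i.val = 2 ∨ J.val % k = 0 then 1 else J.val % k + 1 := by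
  have hJ := J.isLt; have hi := i.isLt
  have hk : (blk J i).val = 3 * J.val + i.val := rfl
  have hm : (blk J i).val % (3*k) = 3 * (J.val % k) + i.val := by
    rw [hk]
    rcases lt_or_ge J.val k with h | h
    · rw [Nat.mod_eq_of_lt (by omega : 3*J.val + i.val < 3*k), Nat.mod_eq_of_lt h]
    · rw [Nat.mod_eq_sub_mod (by omega : 3*k ≤ 3*J.val + i.val),
        Nat.mod_eq_of_lt (by omega : 3*J.val + i.val - 3*k < 3*k),
        Nat.mod_eq_sub_mod h, Nat.mod_eq_of_lt (by omega : J.val - k < k)]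
      omega
  unfold rowIdx
  rw [hm]
  split_ifs <;> omega

lemma blk_inj {k : ℕ} {J J' : Fin (2*k)} {i i' : Fin 3}
    (h : blk J i = blk J' i') : J = J' ∧ i = i' := by
  have h1 : (3 * J.val + i.val : ℕ) = 3 * J'.val + i'.val := congrArg Fin.val h
  have hi := i.isLt; have hi' := i'.isLt
  constructor <;> [skip; skip] <;> exact Fin.ext (by omega)

lemma blk_decomp {k : ℕ} (a : Fin (6*k)) :
    a = blk ⟨a.val / 3, by have := a.isLt; omega⟩ ⟨a.val % 3, by omega⟩ :=
  Fin.ext (by have := a.isLt; simp [blk]; omega)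

lemma Ffun_blk {k : ℕ} (j : Fin (2*k)) (i : Fin 3) :
    Ffun k (blk j i) = blk (if h : j.val < k then ⟨j.val + k, by omega⟩
      else ⟨j.val - k, by have := j.isLt; omega⟩) i := by
  have hj := j.isLt; have hi := i.isLt
  unfold Ffun
  apply Fin.ext
  by_cases h : j.val < k
  · rw [dif_pos (by show 3*j.val + i.val < 3*k; omega), dif_pos h]
    show 3*j.val + i.val + 3*k = 3*(j.val+k) + i.val
    omega
  · rw [dif_neg (by show ¬(3*j.val + i.val < 3*k); omega), dif_neg h]
    show 3*j.val + i.val - 3*k = 3*(j.val-k) + i.val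
    omega

lemma rowIdx_Ffun {k : ℕ} (a : Fin (6*k)) : rowIdx k (Ffun k a) = rowIdx k a := by
  have := a.isLt
  unfold rowIdx Ffun
  by_cases h : a.val < 3*k
  · rw [dif_pos h]
    simp only [Nat.add_mod_right]
  · rw [dif_neg h]
    have h1 : (a.val - 3*k) % (3*k) = a.val - 3*k := Nat.mod_eq_of_lt (by omega)
    have h2 : a.val % (3*k) = a.val - 3*k := by
      rw [Nat.mod_eq_sub_mod (by omega)]; exact Nat.mod_eq_of_lt (by omega)
    rw [h1, h2]

section CKey
variable {k : ℕ} {C : Equiv.Perm (Fin (6*k))}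

lemma perm_fix_maps {S : Set (Fin (6*k))} (hfix : ∀ a, a ∉ S → C a = a) :
    ∀ a ∈ S, C a ∈ S := by
  intro a ha
  by_contra hna
  have h1 : C (C a) = C a := hfix _ hna
  rw [← C.injective h1] at ha
  exact hna ha

variable (hCcol : ∀ l : Fin 4, ∀ a ∈ colK k l, C a ∈ colK k l)
  (hCfix : ∀ a : Fin (6*k), (∀ l : Fin 4, a ∉ colK k l) → C a = a)

include hCcol hCfix in
lemma inv_colK : (∀ l : Fin 4, ∀ a ∈ colK k l, C⁻¹ a ∈ colK k l) ∧
    (∀ a : Fin (6*k), (∀ l : Fin 4, a ∉ colK k l) → C⁻¹ a = a) := by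
  constructor
  · intro l a ha
    by_cases h : ∀ l', C⁻¹ a ∉ colK k l'
    · have h1 : C (C⁻¹ a) = C⁻¹ a := hCfix _ h
      rw [show ∀ x, C (C⁻¹ x) = x from fun x => C.apply_symm_apply x] at h1
      rw [← h1]; exact ha
    · push_neg at h
      obtain ⟨l', hl'⟩ := h
      have h2 : C (C⁻¹ a) ∈ colK k l' := hCcol l' _ hl'
      rw [show ∀ x, C (C⁻¹ x) = x from fun x => C.apply_symm_apply x] at h2
      rw [colK_disjoint ha h2]; exact hl'
  · intro a ha
    have h0 : ∀ l, C⁻¹ a ∉ colK k l := by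
      intro l hl
      have := hCcol l _ hl
      rw [show ∀ x, C (C⁻¹ x) = x from fun x => C.apply_symm_apply x] at this
      exact ha l this
    have h1 : C (C⁻¹ a) = C⁻¹ a := hCfix _ h0
    rw [show ∀ x, C (C⁻¹ x) = x from fun x => C.apply_symm_apply x] at h1
    exact h1.symm

end CKey

lemma mod2k {k : ℕ} (x : ℕ) (hx : x < 2*k) : x % k = if x < k then x else x - k := by
  split
  · exact Nat.mod_eq_of_lt ‹_›
  · rw [Nat.mod_eq_sub_mod (by omega)]; exact Nat.mod_eq_of_lt (by omega)

def colMap (k : ℕ) (l : Fin 4) (t : Fin k) : Fin (6*k) :=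
  blk ⟨t.val + (if l.val % 2 = 1 then k else 0), by have := t.isLt; split <;> omega⟩
      (if l.val < 2 then 0 else 1)

lemma colMap_val (k : ℕ) (l : Fin 4) (t : Fin k) :
    (colMap k l t).val = 3 * (t.val + (if l.val % 2 = 1 then k else 0)) +
      (if l.val < 2 then (0:ℕ) else 1) := by
  show 3 * (t.val + _) + ((if l.val < 2 then (0:Fin 3) else 1)).val = _
  congr 1
  split <;> rfl

lemma colMap_mem (k : ℕ) (l : Fin 4) (t : Fin k) : colMap k l t ∈ colK k l := by
  have ht := t.isLt
  have hv := colMap_val k l t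
  rcases l with ⟨l, hl⟩
  interval_cases l
  · exact (mem_colK0 _).2 (by norm_num at hv ⊢; omega)
  · exact (mem_colK1 _).2 (by norm_num at hv ⊢; omega)
  · exact (mem_colK2 _).2 (by norm_num at hv ⊢; omega)
  · exact (mem_colK3 _).2 (by norm_num at hv ⊢; omega)

def colEquiv (k : ℕ) (l : Fin 4) : Fin k ≃ {x : Fin (6*k) // x ∈ colK k l} where
  toFun t := ⟨colMap k l t, colMap_mem k l t⟩
  invFun x := ⟨if x.val.val < 3*k then x.val.val / 3 else x.val.val / 3 - k,
    by have := x.val.isLt; split <;> omega⟩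
  left_inv t := by
    have ht := t.isLt
    have hv := colMap_val k l t
    apply Fin.ext
    show (if (colMap k l t).val < 3*k then (colMap k l t).val / 3
      else (colMap k l t).val / 3 - k) = t.val
    rw [hv]
    rcases l with ⟨l, hl⟩
    interval_cases l <;> norm_num <;> split <;> omega
  right_inv x := by
    have hx := x.2
    apply Subtype.ext
    apply Fin.ext
    rw [colMap_val]
    rcases l with ⟨l, hl⟩
    interval_cases l
    · obtain ⟨h1, h2⟩ := (mem_colK0 _).1 hx
      norm_num; split <;> omega
    · obtain ⟨h1, h2⟩ := (mem_colK1 _).1 hx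
      have := x.val.isLt
      norm_num; split <;> omega
    · obtain ⟨h1, h2⟩ := (mem_colK2 _).1 hx
      norm_num; split <;> omega
    · obtain ⟨h1, h2⟩ := (mem_colK3 _).1 hx
      have := x.val.isLt
      norm_num; split <;> omega

lemma extendDomain_colEquiv_apply (k : ℕ) (τ : Equiv.Perm (Fin k)) (l : Fin 4)
    [DecidablePred (· ∈ colK k l)] (t : Fin k) :
    τ.extendDomain (colEquiv k l) (colMap k l t) = colMap k l (τ t) :=
  Equiv.Perm.extendDomain_apply_image τ (colEquiv k l) t

set_option maxHeartbeats 3200000 in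
lemma key {k : ℕ} (hk : 1 ≤ k) (C : Equiv.Perm (Fin (6*k)))
    (hCcol : ∀ l : Fin 4, ∀ a ∈ colK k l, C a ∈ colK k l)
    (hCfix : ∀ a : Fin (6*k), (∀ l : Fin 4, a ∉ colK k l) → C a = a)
    (P : Fin (2*k) → Fin (2*k)) (Δ : Fin (2*k) → Fin 3)
    (hPP : ∀ J, P (P J) = J) (hPne : ∀ J, P J ≠ J)
    (hrow : ∀ (J : Fin (2*k)) (w : Fin 3),
       rowIdx k (C (blk (P J) (w + Δ J))) = rowIdx k (C (blk J w))) :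
    Equiv.Perm.sign C = 1 := by
  classical
  have hCcol' := (inv_colK hCcol hCfix).1
  -- images of position-0 elements
  have hC0 : ∀ J : Fin (2*k), ∃ J' : Fin (2*k),
      C (blk J 0) = blk J' 0 ∧ (J'.val < k ↔ J.val < k) := by
    intro J
    have hJ := J.isLt
    have hv : (blk J (0:Fin 3)).val = 3*J.val := rfl
    by_cases h : J.val < k
    · have hm : blk J (0:Fin 3) ∈ colK k 0 := (mem_colK0 _).2 (by rw [hv]; omega)
      have h2 := (mem_colK0 _).1 (hCcol 0 _ hm)
      refine ⟨⟨(C (blk J 0)).val / 3, by omega⟩, Fin.ext ?_, by simp; omega⟩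
      show (C (blk J 0)).val = 3 * ((C (blk J 0)).val / 3) + 0
      omega
    · have hm : blk J (0:Fin 3) ∈ colK k 1 := (mem_colK1 _).2 (by rw [hv]; omega)
      have h2 := (mem_colK1 _).1 (hCcol 1 _ hm)
      have h3 := (C (blk J 0)).isLt
      refine ⟨⟨(C (blk J 0)).val / 3, by omega⟩, Fin.ext ?_, by simp; omega⟩
      show (C (blk J 0)).val = 3 * ((C (blk J 0)).val / 3) + 0
      omega
  have hC1 : ∀ J : Fin (2*k), ∃ J' : Fin (2*k),
      C (blk J 1) = blk J' 1 ∧ (J'.val < k ↔ J.val < k) := by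
    intro J
    have hJ := J.isLt
    have hv : (blk J (1:Fin 3)).val = 3*J.val + 1 := rfl
    by_cases h : J.val < k
    · have hm : blk J (1:Fin 3) ∈ colK k 2 := (mem_colK2 _).2 (by rw [hv]; omega)
      have h2 := (mem_colK2 _).1 (hCcol 2 _ hm)
      refine ⟨⟨(C (blk J 1)).val / 3, by omega⟩, Fin.ext ?_, by simp; omega⟩
      show (C (blk J 1)).val = 3 * ((C (blk J 1)).val / 3) + 1
      omega
    · have hm : blk J (1:Fin 3) ∈ colK k 3 := (mem_colK3 _).2 (by rw [hv]; omega)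
      have h2 := (mem_colK3 _).1 (hCcol 3 _ hm)
      have h3 := (C (blk J 1)).isLt
      refine ⟨⟨(C (blk J 1)).val / 3, by omega⟩, Fin.ext ?_, by simp; omega⟩
      show (C (blk J 1)).val = 3 * ((C (blk J 1)).val / 3) + 1
      omega
  choose A0 hA0 hA0half using hC0
  choose A1 hA1 hA1half using hC1
  have hC2 : ∀ J : Fin (2*k), C (blk J 2) = blk J 2 := by
    intro J
    have hv : (blk J (2:Fin 3)).val = 3*J.val + 2 := rfl
    apply hCfix
    intro l hl
    fin_cases l
    · have := (mem_colK0 _).1 hl; omega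
    · have := (mem_colK1 _).1 hl; omega
    · have := (mem_colK2 _).1 hl; omega
    · have := (mem_colK3 _).1 hl; omega
  set g : Fin (2*k) → ℕ := fun J => (A0 J).val % k with hgdef
  set hh : Fin (2*k) → ℕ := fun J => (A1 J).val % k with hhdef
  have hglt : ∀ J, g J < k := fun J => Nat.mod_lt _ (by omega)
  have hhlt : ∀ J, hh J < k := fun J => Nat.mod_lt _ (by omega)
  have hg_inj : ∀ J J' : Fin (2*k), (J.val < k ↔ J'.val < k) → g J = g J' → J = J' := by
    intro J J' hhalf hg
    have e1 := mod2k (A0 J).val (A0 J).isLt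
    have e2 := mod2k (A0 J').val (A0 J').isLt
    have h1 := hA0half J; have h2 := hA0half J'
    have : A0 J = A0 J' := by
      apply Fin.ext
      simp only [hgdef] at hg
      split at e1 <;> split at e2 <;> omega
    have h3 : C (blk J 0) = C (blk J' 0) := by rw [hA0, hA0, this]
    exact (blk_inj (C.injective h3)).1
  have hh_inj : ∀ J J' : Fin (2*k), (J.val < k ↔ J'.val < k) → hh J = hh J' → J = J' := by
    intro J J' hhalf hg
    have e1 := mod2k (A1 J).val (A1 J).isLt
    have e2 := mod2k (A1 J').val (A1 J').isLt
    have h1 := hA1half J; have h2 := hA1half J'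
    have : A1 J = A1 J' := by
      apply Fin.ext
      simp only [hhdef] at hg
      split at e1 <;> split at e2 <;> omega
    have h3 : C (blk J 1) = C (blk J' 1) := by rw [hA1, hA1, this]
    exact (blk_inj (C.injective h3)).1
  have hg_surjU : ∀ (v : ℕ), v < k → ∃ J : Fin (2*k), J.val < k ∧ g J = v := by
    intro v hv
    have hw : v + 0 < 2*k := by omega
    set y : Fin (6*k) := blk (⟨v + 0, hw⟩ : Fin (2*k)) (0:Fin 3) with hydef
    have hyval : y.val = 3*(v + 0) := rfl
    have hy : y ∈ colK k 0 := (mem_colK0 _).2 (by omega)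
    have hx := hCcol' _ _ hy
    obtain ⟨h1, h2⟩ := (mem_colK0 _).1 hx
    have hlt := (C⁻¹ y).isLt
    refine ⟨⟨(C⁻¹ y).val / 3, by omega⟩,
      by show (C⁻¹ y).val / 3 < k; omega, ?_⟩
    have hxeq : C⁻¹ y = blk (⟨(C⁻¹ y).val / 3, by omega⟩ : Fin (2*k)) (0:Fin 3) :=
      Fin.ext (by show (C⁻¹ y).val = 3 * ((C⁻¹ y).val / 3) + 0; omega)
    have hcx : C (blk (⟨(C⁻¹ y).val / 3, by omega⟩ : Fin (2*k)) (0:Fin 3)) = y := by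
      rw [← hxeq]; exact C.apply_symm_apply _
    rw [hA0] at hcx
    have h4 := (blk_inj hcx).1
    have h5 : (A0 (⟨(C⁻¹ y).val / 3, by omega⟩ : Fin (2*k))).val = v + 0 := by rw [h4]
    show (A0 (⟨(C⁻¹ y).val / 3, by omega⟩ : Fin (2*k))).val % k = v
    have h6 := mod2k (A0 (⟨(C⁻¹ y).val / 3, by omega⟩ : Fin (2*k))).val
      (A0 (⟨(C⁻¹ y).val / 3, by omega⟩ : Fin (2*k))).isLt
    split at h6 <;> omega
  have hg_surjV : ∀ (v : ℕ), v < k → ∃ J : Fin (2*k), ¬ J.val < k ∧ g J = v := by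
    intro v hv
    have hw : v + k < 2*k := by omega
    set y : Fin (6*k) := blk (⟨v + k, hw⟩ : Fin (2*k)) (0:Fin 3) with hydef
    have hyval : y.val = 3*(v + k) := rfl
    have hy : y ∈ colK k 1 := (mem_colK1 _).2 (by omega)
    have hx := hCcol' _ _ hy
    obtain ⟨h1, h2⟩ := (mem_colK1 _).1 hx
    have hlt := (C⁻¹ y).isLt
    refine ⟨⟨(C⁻¹ y).val / 3, by omega⟩,
      by show ¬ ((C⁻¹ y).val / 3 < k); omega, ?_⟩
    have hxeq : C⁻¹ y = blk (⟨(C⁻¹ y).val / 3, by omega⟩ : Fin (2*k)) (0:Fin 3) :=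
      Fin.ext (by show (C⁻¹ y).val = 3 * ((C⁻¹ y).val / 3) + 0; omega)
    have hcx : C (blk (⟨(C⁻¹ y).val / 3, by omega⟩ : Fin (2*k)) (0:Fin 3)) = y := by
      rw [← hxeq]; exact C.apply_symm_apply _
    rw [hA0] at hcx
    have h4 := (blk_inj hcx).1
    have h5 : (A0 (⟨(C⁻¹ y).val / 3, by omega⟩ : Fin (2*k))).val = v + k := by rw [h4]
    show (A0 (⟨(C⁻¹ y).val / 3, by omega⟩ : Fin (2*k))).val % k = v
    have h6 := mod2k (A0 (⟨(C⁻¹ y).val / 3, by omega⟩ : Fin (2*k))).val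
      (A0 (⟨(C⁻¹ y).val / 3, by omega⟩ : Fin (2*k))).isLt
    split at h6 <;> omega
  have hval2 : ((2:Fin 3)).val = 2 := rfl
  have hrow0 : ∀ X, rowIdx k (C (blk X 0)) = if g X = 0 then 1 else g X + 1 := by
    intro X
    rw [hA0 X, rowIdx_blk]
    show (if (0:Fin 3).val = 2 ∨ (A0 X).val % k = 0 then 1 else (A0 X).val % k + 1) = _
    show (if ((0:ℕ) = 2 ∨ (A0 X).val % k = 0) then 1 else (A0 X).val % k + 1) = _
    simp only [hgdef]
    have heq : ((0:ℕ) = 2 ∨ (A0 X).val % k = 0) ↔ ((A0 X).val % k = 0) := by omega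
    simp only [heq]
  have hrow1 : ∀ X, rowIdx k (C (blk X 1)) = if hh X = 0 then 1 else hh X + 1 := by
    intro X
    rw [hA1 X, rowIdx_blk]
    show (if ((1:ℕ) = 2 ∨ (A1 X).val % k = 0) then 1 else (A1 X).val % k + 1) = _
    simp only [hhdef]
    have heq : ((1:ℕ) = 2 ∨ (A1 X).val % k = 0) ↔ ((A1 X).val % k = 0) := by omega
    simp only [heq]
  have hrow2 : ∀ X, rowIdx k (C (blk X 2)) = 1 := by
    intro X
    rw [hC2 X, rowIdx_blk]
    show (if ((2:ℕ) = 2 ∨ X.val % k = 0) then 1 else X.val % k + 1) = 1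
    simp
  have master : ∀ J, (g (P J) = g J ∧ hh (P J) = hh J) ∨
      (hh (P J) = g J ∧ hh J = 0 ∧ g (P J) = 0) ∨
      (g J = 0 ∧ g (P J) = hh J ∧ hh (P J) = 0) := by
    intro J
    have h0 := hrow J 0
    have h1 := hrow J 1
    have h2 := hrow J 2
    rcases (by decide : ∀ x : Fin 3, x = 0 ∨ x = 1 ∨ x = 2) (Δ J) with hd | hd | hd <;>
      rw [hd] at h0 h1 h2
    · rw [show ((0:Fin 3) + 0) = 0 from rfl] at h0
      rw [show ((1:Fin 3) + 0) = 1 from rfl] at h1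
      rw [hrow0, hrow0] at h0
      rw [hrow1, hrow1] at h1
      left
      constructor <;> [skip; skip]
      · split_ifs at h0 <;> omega
      · split_ifs at h1 <;> omega
    · rw [show ((0:Fin 3) + 1) = 1 from rfl] at h0
      rw [show ((1:Fin 3) + 1) = 2 from rfl] at h1
      rw [show ((2:Fin 3) + 1) = 0 from rfl] at h2
      rw [hrow1, hrow0] at h0
      rw [hrow2, hrow1] at h1
      rw [hrow0, hrow2] at h2
      right; left
      refine ⟨?_, ?_, ?_⟩
      · split_ifs at h0 <;> omega
      · split_ifs at h1 <;> omega
      · split_ifs at h2 <;> omega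
    · rw [show ((0:Fin 3) + 2) = 2 from rfl] at h0
      rw [show ((1:Fin 3) + 2) = 0 from rfl] at h1
      rw [show ((2:Fin 3) + 2) = 1 from rfl] at h2
      rw [hrow2, hrow0] at h0
      rw [hrow0, hrow1] at h1
      rw [hrow1, hrow2] at h2
      right; right
      refine ⟨?_, ?_, ?_⟩
      · split_ifs at h0 <;> omega
      · split_ifs at h1 <;> omega
      · split_ifs at h2 <;> omega
  have star : ∀ J J' : Fin (2*k), J.val < k → ¬ J'.val < k → g J = g J' → hh J = hh J' := by
    intro J J' hJU hJ'V hgg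
    have hPJ := hPne J
    have hPJ' := hPne J'
    by_cases hpart : P J = J'
    · rcases master J with ⟨e1, e2⟩ | ⟨e1, e2, e3⟩ | ⟨e1, e2, e3⟩
      · rw [← hpart, e2]
      · rw [hpart] at e1 e3; omega
      · rw [hpart] at e2 e3; omega
    · have hpart' : P J' ≠ J := fun h => hpart (by rw [← h, hPP])
      rcases master J with ⟨e1, e2⟩ | ⟨e1, e2, e3⟩ | ⟨e1, e2, e3⟩
      · exfalso
        by_cases hside : (P J).val < k
        · exact hPJ (hg_inj _ _ (by omega) (by omega))
        · exact hpart (hg_inj _ _ (by omega) (by omega))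
      all_goals rcases master J' with ⟨f1, f2⟩ | ⟨f1, f2, f3⟩ | ⟨f1, f2, f3⟩
      -- J has Δ = 1
      · exfalso
        by_cases hside : (P J').val < k
        · exact hpart' (hg_inj _ _ (by omega) (by omega))
        · exact hPJ' (hg_inj _ _ (by omega) (by omega))
      · omega
      · -- (1,2)
        exfalso
        by_cases hside : (P J).val < k
        · exact hPJ (hg_inj _ _ (by omega) (by omega))
        · exact hpart (hg_inj _ _ (by omega) (by omega))
      -- J has Δ = 2
      · exfalso
        by_cases hside : (P J').val < k
        · exact hpart' (hg_inj _ _ (by omega) (by omega))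
        · exact hPJ' (hg_inj _ _ (by omega) (by omega))
      · -- (2,1)
        exfalso
        by_cases hside : (P J').val < k
        · exact hpart' (hg_inj _ _ (by omega) (by omega))
        · exact hPJ' (hg_inj _ _ (by omega) (by omega))
      · -- (2,2)
        have hopp : ¬ ((P J).val < k ↔ (P J').val < k) := by
          intro hiff
          have h1 : P J = P J' := hh_inj _ _ hiff (by omega)
          have h2 : J = J' := by rw [← hPP J, h1, hPP]
          rw [h2] at hJU
          exact hJ'V hJU
        by_cases hs : (P J).val < k
        · -- P J ∈ U, P J' ∈ V
          have hs' : ¬ (P J').val < k := by tauto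
          obtain ⟨W, hWV, hWg⟩ := hg_surjV (g (P J)) (hglt _)
          rcases master W with ⟨w1, w2⟩ | ⟨w1, w2, w3⟩ | ⟨w1, w2, w3⟩
          · exfalso
            by_cases hw : (P W).val < k
            · have h1 : P W = P J := hg_inj _ _ (by omega) (by omega)
              have h2 : W = J := by rw [← hPP W, h1, hPP]
              rw [h2] at hWV; exact hWV hJU
            · exact hPne W (hg_inj _ _ (by omega) (by omega))
          · by_cases hw : (P W).val < k
            · exfalso
              have h1 : P W = J := hg_inj _ _ (by omega) (by omega)
              have h2 : W = P J := by rw [← hPP W, h1]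
              rw [h2] at hWV; exact hWV hs
            · have h1 : P W = J' := hg_inj _ _ (by omega) (by omega)
              have h2 : W = P J' := by rw [← hPP W, h1]
              rw [h2] at hWg
              omega
          · exfalso
            have h1 : W = J' := hg_inj _ _ (by omega) (by omega)
            rw [h1] at hWg
            have h2 : P J = J := hg_inj _ _ (by omega) (by omega)
            exact hPJ h2
        · -- P J ∈ V, P J' ∈ U
          have hs' : (P J').val < k := by tauto
          obtain ⟨W, hWV, hWg⟩ := hg_surjV (g (P J')) (hglt _)
          rcases master W with ⟨w1, w2⟩ | ⟨w1, w2, w3⟩ | ⟨w1, w2, w3⟩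
          · exfalso
            by_cases hw : (P W).val < k
            · have h1 : P W = P J' := hg_inj _ _ (by omega) (by omega)
              have h2 : W = J' := by rw [← hPP W, h1, hPP]
              rw [h2] at hWg
              have h3 : P J' = J := hg_inj _ _ (by omega) (by omega)
              exact hpart' h3
            · exact hPne W (hg_inj _ _ (by omega) (by omega))
          · by_cases hw : (P W).val < k
            · have h1 : P W = J := hg_inj _ _ (by omega) (by omega)
              have h2 : W = P J := by rw [← hPP W, h1]
              rw [h2] at hWg
              omega
            · exfalso
              have h1 : P W = J' := hg_inj _ _ (by omega) (by omega)
              have h2 : W = P J' := by rw [← hPP W, h1]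
              rw [h2] at hWV; exact hWV hs'
          · exfalso
            have h1 : W = J' := hg_inj _ _ (by omega) (by omega)
            rw [h1] at hWg
            have h3 : P J' = J := hg_inj _ _ (by omega) (by omega)
            exact hpart' h3
  -- the four induced permutations of `Fin k`
  have hinj1 : Function.Injective (fun t : Fin k => (⟨g ⟨t.val, by omega⟩, hglt _⟩ : Fin k)) := by
    intro a b hab
    have h1 := hg_inj ⟨a.val, by omega⟩ ⟨b.val, by omega⟩
      (iff_of_true a.isLt b.isLt) (congrArg Fin.val hab)
    have h2 := congrArg Fin.val h1
    exact Fin.ext h2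
  have hinj2 : Function.Injective (fun t : Fin k => (⟨g ⟨t.val + k, by omega⟩, hglt _⟩ : Fin k)) := by
    intro a b hab
    have h1 := hg_inj ⟨a.val + k, by omega⟩ ⟨b.val + k, by omega⟩
      (iff_of_false (show ¬(a.val + k < k) by omega) (show ¬(b.val + k < k) by omega))
      (congrArg Fin.val hab)
    have h2 : a.val + k = b.val + k := congrArg Fin.val h1
    exact Fin.ext (by omega)
  have hinj3 : Function.Injective (fun t : Fin k => (⟨hh ⟨t.val, by omega⟩, hhlt _⟩ : Fin k)) := by
    intro a b hab
    have h1 := hh_inj ⟨a.val, by omega⟩ ⟨b.val, by omega⟩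
      (iff_of_true a.isLt b.isLt) (congrArg Fin.val hab)
    have h2 := congrArg Fin.val h1
    exact Fin.ext h2
  have hinj4 : Function.Injective (fun t : Fin k => (⟨hh ⟨t.val + k, by omega⟩, hhlt _⟩ : Fin k)) := by
    intro a b hab
    have h1 := hh_inj ⟨a.val + k, by omega⟩ ⟨b.val + k, by omega⟩
      (iff_of_false (show ¬(a.val + k < k) by omega) (show ¬(b.val + k < k) by omega))
      (congrArg Fin.val hab)
    have h2 : a.val + k = b.val + k := congrArg Fin.val h1
    exact Fin.ext (by omega)
  obtain ⟨t1, ht1⟩ : ∃ p : Equiv.Perm (Fin k), ∀ t : Fin k,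
      (p t : Fin k).val = g ⟨t.val, by omega⟩ :=
    ⟨Equiv.ofBijective _ (Finite.injective_iff_bijective.mp hinj1), fun t => rfl⟩
  obtain ⟨t2, ht2⟩ : ∃ p : Equiv.Perm (Fin k), ∀ t : Fin k,
      (p t : Fin k).val = g ⟨t.val + k, by omega⟩ :=
    ⟨Equiv.ofBijective _ (Finite.injective_iff_bijective.mp hinj2), fun t => rfl⟩
  obtain ⟨t3, ht3⟩ : ∃ p : Equiv.Perm (Fin k), ∀ t : Fin k,
      (p t : Fin k).val = hh ⟨t.val, by omega⟩ :=
    ⟨Equiv.ofBijective _ (Finite.injective_iff_bijective.mp hinj3), fun t => rfl⟩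
  obtain ⟨t4, ht4⟩ : ∃ p : Equiv.Perm (Fin k), ∀ t : Fin k,
      (p t : Fin k).val = hh ⟨t.val + k, by omega⟩ :=
    ⟨Equiv.ofBijective _ (Finite.injective_iff_bijective.mp hinj4), fun t => rfl⟩
  have hperm : (t2⁻¹ * t1 : Equiv.Perm (Fin k)) = t4⁻¹ * t3 := by
    apply Equiv.ext
    intro t
    show t2⁻¹ (t1 t) = t4⁻¹ (t3 t)
    have hu : t2 (t2⁻¹ (t1 t)) = t1 t := t2.apply_symm_apply _
    have hg1 : g ⟨t.val, by omega⟩ = g ⟨(t2⁻¹ (t1 t)).val + k, by omega⟩ := by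
      have h2 := congrArg Fin.val hu
      rw [ht2, ht1] at h2
      exact h2.symm
    have hhh := star ⟨t.val, by omega⟩ ⟨(t2⁻¹ (t1 t)).val + k, by omega⟩ t.isLt
      (show ¬((t2⁻¹ (t1 t)).val + k < k) by omega) hg1
    have h34 : t3 t = t4 (t2⁻¹ (t1 t)) := by
      apply Fin.ext
      rw [ht3, ht4]
      exact hhh
    rw [h34]
    exact (t4.symm_apply_apply _).symm
  have hnotmem : ∀ (l l' : Fin 4) (a : Fin (6*k)), l ≠ l' → a ∈ colK k l → a ∉ colK k l' :=
    fun l l' a hne h h' => hne (colK_disjoint h h')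
  have hCeq : C = t1.extendDomain (colEquiv k 0) * (t2.extendDomain (colEquiv k 1) *
      (t3.extendDomain (colEquiv k 2) * t4.extendDomain (colEquiv k 3))) := by
    apply Equiv.ext
    intro a
    have halt := a.isLt
    simp only [Equiv.Perm.mul_apply]
    by_cases h0 : a ∈ colK k 0
    · obtain ⟨hb1, hb2⟩ := (mem_colK0 _).1 h0
      have hJ : a.val / 3  < k := by omega
      rw [Equiv.Perm.extendDomain_apply_not_subtype _ _ (hnotmem 0 3 a (by decide) h0)]
      rw [Equiv.Perm.extendDomain_apply_not_subtype _ _ (hnotmem 0 2 a (by decide) h0)]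
      rw [Equiv.Perm.extendDomain_apply_not_subtype _ _ (hnotmem 0 1 a (by decide) h0)]
      obtain ⟨ta, hta⟩ : ∃ t : Fin k, t.val = a.val/3  := ⟨⟨a.val/3 , hJ⟩, rfl⟩
      obtain ⟨X0, hX0⟩ : ∃ X : Fin (2*k), X.val = a.val/3 :=
        ⟨⟨a.val/3, by omega⟩, rfl⟩
      have hif1 : (if ((0:Fin 4)).val % 2 = 1 then k else 0) = 0 := rfl
      have hif2 : (if ((0:Fin 4)).val < 2 then (0:ℕ) else 1) = 0 := rfl
      have ha : a = colMap k 0 ta := by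
        apply Fin.ext
        rw [colMap_val, hif1, hif2]
        omega
      have hE : (t1.extendDomain (colEquiv k 0)) a = colMap k 0 (t1 ta) := by
        conv_lhs => rw [ha]
        exact extendDomain_colEquiv_apply k t1 0 ta
      rw [hE]
      have hblk : a = blk X0 (0:Fin 3) := by
        apply Fin.ext
        show a.val = 3*X0.val + 0
        omega
      have hCa : C a = blk (A0 X0) 0 := by
        conv_lhs => rw [hblk]
        exact hA0 X0
      have hteq : (t1 ta : Fin k).val = g ⟨ta.val , by omega⟩ := ht1 ta
      have hXeq : (⟨ta.val , by omega⟩ : Fin (2*k)) = X0 := Fin.ext (by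
        show ta.val  = X0.val
        omega)
      rw [hXeq] at hteq
      have hgX0 : g X0 = (A0 X0).val % k := rfl
      have hmod := mod2k (A0 X0).val (A0 X0).isLt
      have hhalf := hA0half X0
      have e1 : (blk (A0 X0) (0:Fin 3)).val = 3 * (A0 X0).val + 0 := rfl
      have e2 := colMap_val k 0 (t1 ta)
      rw [hif1, hif2] at e2
      rw [hCa]
      apply Fin.ext
      split at hmod <;> omega
    by_cases h1 : a ∈ colK k 1
    · obtain ⟨hb1, hb2⟩ := (mem_colK1 _).1 h1
      have hJ : a.val / 3 - k < k := by omega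
      rw [Equiv.Perm.extendDomain_apply_not_subtype _ _ (hnotmem 1 3 a (by decide) h1)]
      rw [Equiv.Perm.extendDomain_apply_not_subtype _ _ (hnotmem 1 2 a (by decide) h1)]
      obtain ⟨ta, hta⟩ : ∃ t : Fin k, t.val = a.val/3 - k := ⟨⟨a.val/3 - k, hJ⟩, rfl⟩
      obtain ⟨X0, hX0⟩ : ∃ X : Fin (2*k), X.val = a.val/3 :=
        ⟨⟨a.val/3, by omega⟩, rfl⟩
      have hif1 : (if ((1:Fin 4)).val % 2 = 1 then k else 0) = k := rfl
      have hif2 : (if ((1:Fin 4)).val < 2 then (0:ℕ) else 1) = 0 := rfl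
      have ha : a = colMap k 1 ta := by
        apply Fin.ext
        rw [colMap_val, hif1, hif2]
        omega
      have hE : (t2.extendDomain (colEquiv k 1)) a = colMap k 1 (t2 ta) := by
        conv_lhs => rw [ha]
        exact extendDomain_colEquiv_apply k t2 1 ta
      rw [hE]
      rw [Equiv.Perm.extendDomain_apply_not_subtype _ _
        (hnotmem 1 0 (colMap k 1 (t2 ta)) (by decide) (colMap_mem k 1 (t2 ta)))]
      have hblk : a = blk X0 (0:Fin 3) := by
        apply Fin.ext
        show a.val = 3*X0.val + 0
        omega
      have hCa : C a = blk (A0 X0) 0 := by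
        conv_lhs => rw [hblk]
        exact hA0 X0
      have hteq : (t2 ta : Fin k).val = g ⟨ta.val + k, by omega⟩ := ht2 ta
      have hXeq : (⟨ta.val + k, by omega⟩ : Fin (2*k)) = X0 := Fin.ext (by
        show ta.val + k = X0.val
        omega)
      rw [hXeq] at hteq
      have hgX0 : g X0 = (A0 X0).val % k := rfl
      have hmod := mod2k (A0 X0).val (A0 X0).isLt
      have hhalf := hA0half X0
      have e1 : (blk (A0 X0) (0:Fin 3)).val = 3 * (A0 X0).val + 0 := rfl
      have e2 := colMap_val k 1 (t2 ta)
      rw [hif1, hif2] at e2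
      rw [hCa]
      apply Fin.ext
      split at hmod <;> omega
    by_cases h2 : a ∈ colK k 2
    · obtain ⟨hb1, hb2⟩ := (mem_colK2 _).1 h2
      have hJ : a.val / 3  < k := by omega
      rw [Equiv.Perm.extendDomain_apply_not_subtype _ _ (hnotmem 2 3 a (by decide) h2)]
      obtain ⟨ta, hta⟩ : ∃ t : Fin k, t.val = a.val/3  := ⟨⟨a.val/3 , hJ⟩, rfl⟩
      obtain ⟨X0, hX0⟩ : ∃ X : Fin (2*k), X.val = a.val/3 :=
        ⟨⟨a.val/3, by omega⟩, rfl⟩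
      have hif1 : (if ((2:Fin 4)).val % 2 = 1 then k else 0) = 0 := rfl
      have hif2 : (if ((2:Fin 4)).val < 2 then (0:ℕ) else 1) = 1 := rfl
      have ha : a = colMap k 2 ta := by
        apply Fin.ext
        rw [colMap_val, hif1, hif2]
        omega
      have hE : (t3.extendDomain (colEquiv k 2)) a = colMap k 2 (t3 ta) := by
        conv_lhs => rw [ha]
        exact extendDomain_colEquiv_apply k t3 2 ta
      rw [hE]
      rw [Equiv.Perm.extendDomain_apply_not_subtype _ _
        (hnotmem 2 1 (colMap k 2 (t3 ta)) (by decide) (colMap_mem k 2 (t3 ta)))]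
      rw [Equiv.Perm.extendDomain_apply_not_subtype _ _
        (hnotmem 2 0 (colMap k 2 (t3 ta)) (by decide) (colMap_mem k 2 (t3 ta)))]
      have hblk : a = blk X0 (1:Fin 3) := by
        apply Fin.ext
        show a.val = 3*X0.val + 1
        omega
      have hCa : C a = blk (A1 X0) 1 := by
        conv_lhs => rw [hblk]
        exact hA1 X0
      have hteq : (t3 ta : Fin k).val = hh ⟨ta.val , by omega⟩ := ht3 ta
      have hXeq : (⟨ta.val , by omega⟩ : Fin (2*k)) = X0 := Fin.ext (by
        show ta.val  = X0.val
        omega)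
      rw [hXeq] at hteq
      have hgX0 : hh X0 = (A1 X0).val % k := rfl
      have hmod := mod2k (A1 X0).val (A1 X0).isLt
      have hhalf := hA1half X0
      have e1 : (blk (A1 X0) (1:Fin 3)).val = 3 * (A1 X0).val + 1 := rfl
      have e2 := colMap_val k 2 (t3 ta)
      rw [hif1, hif2] at e2
      rw [hCa]
      apply Fin.ext
      split at hmod <;> omega
    by_cases h3 : a ∈ colK k 3
    · obtain ⟨hb1, hb2⟩ := (mem_colK3 _).1 h3
      have hJ : a.val / 3 - k < k := by omega
      obtain ⟨ta, hta⟩ : ∃ t : Fin k, t.val = a.val/3 - k := ⟨⟨a.val/3 - k, hJ⟩, rfl⟩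
      obtain ⟨X0, hX0⟩ : ∃ X : Fin (2*k), X.val = a.val/3 :=
        ⟨⟨a.val/3, by omega⟩, rfl⟩
      have hif1 : (if ((3:Fin 4)).val % 2 = 1 then k else 0) = k := rfl
      have hif2 : (if ((3:Fin 4)).val < 2 then (0:ℕ) else 1) = 1 := rfl
      have ha : a = colMap k 3 ta := by
        apply Fin.ext
        rw [colMap_val, hif1, hif2]
        omega
      have hE : (t4.extendDomain (colEquiv k 3)) a = colMap k 3 (t4 ta) := by
        conv_lhs => rw [ha]
        exact extendDomain_colEquiv_apply k t4 3 ta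
      rw [hE]
      rw [Equiv.Perm.extendDomain_apply_not_subtype _ _
        (hnotmem 3 2 (colMap k 3 (t4 ta)) (by decide) (colMap_mem k 3 (t4 ta)))]
      rw [Equiv.Perm.extendDomain_apply_not_subtype _ _
        (hnotmem 3 1 (colMap k 3 (t4 ta)) (by decide) (colMap_mem k 3 (t4 ta)))]
      rw [Equiv.Perm.extendDomain_apply_not_subtype _ _
        (hnotmem 3 0 (colMap k 3 (t4 ta)) (by decide) (colMap_mem k 3 (t4 ta)))]
      have hblk : a = blk X0 (1:Fin 3) := by
        apply Fin.ext
        show a.val = 3*X0.val + 1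
        omega
      have hCa : C a = blk (A1 X0) 1 := by
        conv_lhs => rw [hblk]
        exact hA1 X0
      have hteq : (t4 ta : Fin k).val = hh ⟨ta.val + k, by omega⟩ := ht4 ta
      have hXeq : (⟨ta.val + k, by omega⟩ : Fin (2*k)) = X0 := Fin.ext (by
        show ta.val + k = X0.val
        omega)
      rw [hXeq] at hteq
      have hgX0 : hh X0 = (A1 X0).val % k := rfl
      have hmod := mod2k (A1 X0).val (A1 X0).isLt
      have hhalf := hA1half X0
      have e1 : (blk (A1 X0) (1:Fin 3)).val = 3 * (A1 X0).val + 1 := rfl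
      have e2 := colMap_val k 3 (t4 ta)
      rw [hif1, hif2] at e2
      rw [hCa]
      apply Fin.ext
      split at hmod <;> omega
    · rw [Equiv.Perm.extendDomain_apply_not_subtype _ _ h3,
          Equiv.Perm.extendDomain_apply_not_subtype _ _ h2,
          Equiv.Perm.extendDomain_apply_not_subtype _ _ h1,
          Equiv.Perm.extendDomain_apply_not_subtype _ _ h0]
      apply hCfix
      intro l
      fin_cases l <;> assumption
  have hsign := congrArg (Equiv.Perm.sign) hCeq
  rw [map_mul, map_mul, map_mul, Equiv.Perm.sign_extendDomain, Equiv.Perm.sign_extendDomain,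
      Equiv.Perm.sign_extendDomain, Equiv.Perm.sign_extendDomain] at hsign
  have h1eq : t1 = t2 * (t4⁻¹ * t3) := by
    calc t1 = t2 * (t2⁻¹ * t1) := by group
    _ = t2 * (t4⁻¹ * t3) := by rw [hperm]
  rw [hsign, h1eq, map_mul, map_mul, map_inv]
  rcases Int.units_eq_one_or (Equiv.Perm.sign t2) with h|h <;>
  rcases Int.units_eq_one_or (Equiv.Perm.sign t3) with h'|h' <;>
  rcases Int.units_eq_one_or (Equiv.Perm.sign t4) with h''|h'' <;>
  rw [h, h', h''] <;> decide

def tausw (k : ℕ) (j : Fin (2*k)) : Fin (2*k) :=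
  if h : j.val < k then ⟨j.val + k, by omega⟩
  else ⟨j.val - k, by have := j.isLt; omega⟩

lemma tausw_tausw (k : ℕ) (j : Fin (2*k)) : tausw k (tausw k j) = j := by
  have hj := j.isLt
  unfold tausw
  by_cases h1 : j.val < k
  · rw [dif_pos h1, dif_neg (show ¬((⟨j.val + k, by omega⟩ : Fin (2*k)).val < k) from by
      show ¬(j.val + k < k); omega)]
    exact Fin.ext (by show j.val + k - k = j.val; omega)
  · rw [dif_neg h1, dif_pos (show ((⟨j.val - k, by omega⟩ : Fin (2*k)).val < k) from by
      show j.val - k < k; omega)]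
    exact Fin.ext (by show j.val - k + k = j.val; omega)

lemma tausw_ne (k : ℕ) (j : Fin (2*k)) : tausw k j ≠ j := by
  intro hje
  have hj := j.isLt
  have h2 : (tausw k j).val = j.val := congrArg Fin.val hje
  unfold tausw at h2
  by_cases h1 : j.val < k
  · rw [dif_pos h1] at h2
    have h3 : j.val + k = j.val := h2
    omega
  · rw [dif_neg h1] at h2
    have h3 : j.val - k = j.val := h2
    omega

lemma Fperm_blk (k : ℕ) (j : Fin (2*k)) (i : Fin 3) :
    Fperm k (blk j i) = blk (tausw k j) i := by
  have hj := j.isLt; have hi := i.isLt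
  show Ffun k (blk j i) = _
  rw [Ffun_blk]
  unfold tausw
  by_cases h : j.val < k
  · rw [dif_pos h]
  · rw [dif_neg h]

lemma rowIdx_Fperm (k : ℕ) (y : Fin (6*k)) : rowIdx k (Fperm k y) = rowIdx k y :=
  rowIdx_Ffun y

theorem stmt5 (k : ℕ) (hk : 1 ≤ k) (q c r : Equiv.Perm (Fin (6 * k)))
    (hq : q ∈ Qset k) (hc : c ∈ Cset k) (hr : r ∈ Rset k)
    (h : q * Fperm k * q⁻¹ = (c * r) * Fperm k * (c * r)⁻¹) :
    Equiv.Perm.sign c = 1 := by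
  classical
  obtain ⟨b, hb, d, hd, hqeq⟩ := hq
  choose sfun hs using hb
  obtain ⟨π, hπ⟩ := hd
  obtain ⟨c₁, hc₁, c₂, hc₂, c₃, hc₃, c₄, hc₄, hceq⟩ := hc
  have hrp : ∀ a, rowIdx k (r a) = rowIdx k a := hr
  have hfixgen : ∀ (i : Fin 4) (x : Equiv.Perm (Fin (6*k))), x ∈ Cgrp k i →
      ∀ (l : Fin 4) (a : Fin (6*k)), l ≠ i → a ∈ colK k l → x a = a :=
    fun i x hx l a hli ha => hx a (fun hmem => hli (colK_disjoint ha hmem))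
  have hmapgen : ∀ (i : Fin 4) (x : Equiv.Perm (Fin (6*k))), x ∈ Cgrp k i →
      ∀ a ∈ colK k i, x a ∈ colK k i :=
    fun i x hx => perm_fix_maps (fun a ha => hx a ha)
  have happ : ∀ a, c a = c₁ (c₂ (c₃ (c₄ a))) := by
    intro a; rw [hceq]; rfl
  have hccol : ∀ l : Fin 4, ∀ a ∈ colK k l, c a ∈ colK k l := by
    intro l a ha
    rw [happ]
    fin_cases l
    · rw [hfixgen 3 c₄ hc₄ 0 a (by decide) ha, hfixgen 2 c₃ hc₃ 0 a (by decide) ha,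
        hfixgen 1 c₂ hc₂ 0 a (by decide) ha]
      exact hmapgen 0 c₁ hc₁ a ha
    · rw [hfixgen 3 c₄ hc₄ 1 a (by decide) ha, hfixgen 2 c₃ hc₃ 1 a (by decide) ha]
      have h2 := hmapgen 1 c₂ hc₂ a ha
      rw [hfixgen 0 c₁ hc₁ 1 (c₂ a) (by decide) h2]
      exact h2
    · rw [hfixgen 3 c₄ hc₄ 2 a (by decide) ha]
      have h3 := hmapgen 2 c₃ hc₃ a ha
      rw [hfixgen 1 c₂ hc₂ 2 (c₃ a) (by decide) h3, hfixgen 0 c₁ hc₁ 2 (c₃ a) (by decide) h3]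
      exact h3
    · have h4 := hmapgen 3 c₄ hc₄ a ha
      rw [hfixgen 2 c₃ hc₃ 3 (c₄ a) (by decide) h4, hfixgen 1 c₂ hc₂ 3 (c₄ a) (by decide) h4,
        hfixgen 0 c₁ hc₁ 3 (c₄ a) (by decide) h4]
      exact h4
  have hcfix : ∀ a : Fin (6*k), (∀ l : Fin 4, a ∉ colK k l) → c a = a := by
    intro a ha
    rw [happ, hc₄ a (ha 3), hc₃ a (ha 2), hc₂ a (ha 1), hc₁ a (ha 0)]
  obtain ⟨hCcol, hCfix⟩ := inv_colK hccol hcfix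
  have hqblk : ∀ (j : Fin (2*k)) (i : Fin 3), q (blk j i) = blk (π j) (i + sfun (π j)) := by
    intro j i
    rw [hqeq]
    show b (d (blk j i)) = _
    rw [hπ j i, hs (π j) i]
  have hKrow : ∀ y, rowIdx k (c⁻¹ (q (Fperm k y))) = rowIdx k (c⁻¹ (q y)) := by
    intro y
    have h1 : (q * Fperm k * q⁻¹) (q y) = ((c * r) * Fperm k * (c * r)⁻¹) (q y) := by rw [h]
    simp only [Equiv.Perm.mul_apply, mul_inv_rev] at h1
    rw [show ∀ x, q⁻¹ (q x) = x from fun x => q.symm_apply_apply x] at h1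
    have h2 : c⁻¹ (q (Fperm k y)) = r (Fperm k (r⁻¹ (c⁻¹ (q y)))) := by
      rw [h1]
      exact c.symm_apply_apply _
    rw [h2, hrp (Fperm k (r⁻¹ (c⁻¹ (q y)))), rowIdx_Fperm]
    have h3 := hrp (r⁻¹ (c⁻¹ (q y)))
    rw [show ∀ x, r (r⁻¹ x) = x from fun x => r.apply_symm_apply x] at h3
    exact h3.symm
  have hbase : ∀ (j : Fin (2*k)) (i : Fin 3),
      rowIdx k (c⁻¹ (blk (π (tausw k j)) (i + sfun (π (tausw k j)))))
        = rowIdx k (c⁻¹ (blk (π j) (i + sfun (π j)))) := by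
    intro j i
    have h1 := hKrow (blk j i)
    rw [Fperm_blk, hqblk, hqblk] at h1
    exact h1
  have hPP : ∀ J : Fin (2*k), π (tausw k (π.symm (π (tausw k (π.symm J))))) = J := by
    intro J
    rw [Equiv.symm_apply_apply, tausw_tausw, Equiv.apply_symm_apply]
  have hPne : ∀ J : Fin (2*k), π (tausw k (π.symm J)) ≠ J := by
    intro J hJe
    have h1 : tausw k (π.symm J) = π.symm J := by
      apply π.injective
      rw [hJe, Equiv.apply_symm_apply]
    exact tausw_ne k _ h1
  have hrowP : ∀ (J : Fin (2*k)) (w : Fin 3),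
      rowIdx k (c⁻¹ (blk (π (tausw k (π.symm J)))
        (w + (sfun (π (tausw k (π.symm J))) - sfun J))))
      = rowIdx k (c⁻¹ (blk J w)) := by
    intro J w
    have hbs := hbase (π.symm J) (w - sfun J)
    rw [Equiv.apply_symm_apply] at hbs
    rw [sub_add_cancel] at hbs
    rw [sub_add_eq_add_sub, add_sub_assoc] at hbs
    exact hbs
  have hsgn := key hk c⁻¹ hCcol hCfix (fun J => π (tausw k (π.symm J)))
    (fun J => sfun (π (tausw k (π.symm J))) - sfun J) hPP hPne hrowP
  rw [map_inv] at hsgn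
  exact inv_eq_one.mp hsgn
end
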